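/- arXiv:1203.3958 — 2 statements merged into one kernel-verified Lean document; each statement's English description precedes it below -/
import Mathlib

section
/- Let A be a finite-dimensional complex C*-algebra with a faithful tracial state τ, let B ⊆ A be a unital *-subalgebra, and let E : A → B be the trace-preserving conditional expectation, i.e., a linear map satisfying E(b) = b for all b ∈ B, τ(E(a)) = τ(a) for all a ∈ A, E(b·a·b') = b·E(a)·b' for all b,b' ∈ B and a ∈ A, and E(x) ≥ 0 whenever x ≥ 0. Let p ∈ B be a projection (p = p* = p²), and let (u_α)_{α∈F} be an orthonormal basis, with respect to ⟨x,y⟩ = τ(x* y), of the left ideal A·p = { a·p : a ∈ A }. Then the element z := Σ_{α∈F} E(u_α* · u_α) lies in the corner p·B·p, is positive, and is invertible in the corner: there exists v ∈ p·B·p with v·z = z·v = p. -/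
open scoped ComplexOrder

/-- For a trace-preserving conditional expectation `E : A → B` onto a unital
*-subalgebra of a finite-dimensional C*-algebra, a projection `p ∈ B`, and an
orthonormal basis `u` of the left ideal `A·p`, the element
`z := ∑ α, E ((u α)* * u α)` lies in the corner `p·B·p`, is positive, and is
invertible in the corner. -/
theorem stmt_5
    (A : Type*) [NormedRing A] [StarRing A] [CStarRing A]
    [NormedAlgebra ℂ A] [StarModule ℂ A] [CompleteSpace A] [FiniteDimensional ℂ A]
    (τ : A →ₗ[ℂ] ℂ)
    (hτ1 : τ 1 = 1)
    (hτtr : ∀ a b : A, τ (a * b) = τ (b * a))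
    (hτpos : ∀ a : A, 0 ≤ τ (star a * a))
    (hτfaith : ∀ a : A, τ (star a * a) = 0 → a = 0)
    (B : StarSubalgebra ℂ A)
    (E : A →ₗ[ℂ] A)
    (hE_mem : ∀ a : A, E a ∈ B)
    (hE_id : ∀ b ∈ B, E b = b)
    (hE_tr : ∀ a : A, τ (E a) = τ a)
    (hE_bimod : ∀ b ∈ B, ∀ b' ∈ B, ∀ a : A, E (b * a * b') = b * E a * b')
    (hE_pos : ∀ x : A, (∃ y : A, x = star y * y) → ∃ y : A, E x = star y * y)
    (p : A) (hpB : p ∈ B) (hp_star : star p = p) (hp_idem : p * p = p)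
    (F : Type*) [Fintype F] [DecidableEq F]
    (u : Module.Basis F ℂ (LinearMap.range (LinearMap.mulRight ℂ p)))
    (hu : ∀ α β : F, τ (star ((u α : A)) * (u β : A)) = if α = β then 1 else 0) :
    (∃ b ∈ B, ∑ α : F, E (star (u α : A) * (u α : A)) = p * b * p) ∧
    (∃ y : A, ∑ α : F, E (star (u α : A) * (u α : A)) = star y * y) ∧
    (∃ v : A, (∃ b ∈ B, v = p * b * p) ∧
      v * ∑ α : F, E (star (u α : A) * (u α : A)) = p ∧
      (∑ α : F, E (star (u α : A) * (u α : A))) * v = p) := by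
  classical
  set z : A := ∑ α : F, E (star (u α : A) * (u α : A)) with hzdef
  -- each basis vector absorbs p on the right
  have hup : ∀ α : F, (u α : A) * p = (u α : A) := by
    intro α
    obtain ⟨a, ha⟩ := (u α).2
    have h : a * p = (u α : A) := by simpa [LinearMap.mulRight_apply] using ha
    rw [← h, mul_assoc, hp_idem]
  have huu : ∀ α : F, p * (star (u α : A) * (u α : A)) * p = star (u α : A) * (u α : A) := by
    intro α
    conv_rhs => rw [← hup α]
    simp [star_mul, hp_star, mul_assoc]
  have hzB : z ∈ B := sum_mem fun α _ => hE_mem _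
  have hzpz : p * z * p = z := by
    rw [hzdef, Finset.mul_sum, Finset.sum_mul]
    exact Finset.sum_congr rfl fun α _ => by
      rw [← hE_bimod p hpB p hpB, huu α]
  have hpz : p * z = z := by
    conv_lhs => rw [← hzpz]
    rw [← mul_assoc, ← mul_assoc, hp_idem]
    exact hzpz
  have hzp : z * p = z := by
    conv_lhs => rw [← hzpz]
    rw [mul_assoc, mul_assoc, hp_idem, ← mul_assoc]
    exact hzpz
  -- the corner as a submodule
  set S : Submodule ℂ A :=
    (Subalgebra.toSubmodule B.toSubalgebra).map
      ((LinearMap.mulRight ℂ p).comp (LinearMap.mulLeft ℂ p)) with hSdef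
  have hSmem : ∀ x : A, x ∈ S ↔ ∃ b ∈ B, x = p * b * p := by
    intro x
    constructor
    · rintro ⟨b, hb, rfl⟩
      exact ⟨b, hb, by simp [LinearMap.mulRight_apply, LinearMap.mulLeft_apply]⟩
    · rintro ⟨b, hb, rfl⟩
      exact ⟨b, hb, by simp [LinearMap.mulRight_apply, LinearMap.mulLeft_apply]⟩
  have hSsubB : ∀ x ∈ S, x ∈ B := by
    intro x hx
    obtain ⟨b, hb, rfl⟩ := (hSmem x).mp hx
    exact mul_mem (mul_mem hpB hb) hpB
  have hzS : z ∈ S := (hSmem z).mpr ⟨z, hzB, hzpz.symm⟩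
  have hpS : p ∈ S := (hSmem p).mpr ⟨1, one_mem B, by rw [mul_one, hp_idem]⟩
  have hmulS : ∀ x ∈ S, ∀ y ∈ S, x * y ∈ S := by
    intro x hx y hy
    obtain ⟨b, hb, rfl⟩ := (hSmem x).mp hx
    obtain ⟨c, hc, rfl⟩ := (hSmem y).mp hy
    refine (hSmem _).mpr ⟨b * p * p * c, mul_mem (mul_mem (mul_mem hb hpB) hpB) hc, ?_⟩
    simp [mul_assoc]
  -- key injectivity statement
  have hinj : ∀ x ∈ S, z * x = 0 → x = 0 := by
    intro x hxS hzx0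
    obtain ⟨b, hbB, hxeq⟩ := (hSmem x).mp hxS
    have hxB : x ∈ B := hSsubB x hxS
    have hsxB : star x ∈ B := star_mem hxB
    have key : ∀ α : F, star x * E (star (u α : A) * (u α : A)) * x
        = E (star ((u α : A) * x) * ((u α : A) * x)) := by
      intro α
      rw [← hE_bimod (star x) hsxB x hxB]
      congr 1
      simp [star_mul, mul_assoc]
    have hsum : ∑ α : F, τ (star ((u α : A) * x) * ((u α : A) * x)) = 0 := by
      have h1 : star x * z * x = 0 := by rw [mul_assoc, hzx0, mul_zero]
      have h2 : star x * z * x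
          = ∑ α : F, star x * E (star (u α : A) * (u α : A)) * x := by
        rw [hzdef, Finset.mul_sum, Finset.sum_mul]
      calc ∑ α : F, τ (star ((u α : A) * x) * ((u α : A) * x))
          = ∑ α : F, τ (star x * E (star (u α : A) * (u α : A)) * x) := by
            refine Finset.sum_congr rfl fun α _ => ?_
            rw [key α, hE_tr]
        _ = τ (star x * z * x) := by rw [h2, map_sum]
        _ = 0 := by rw [h1, map_zero]
    have hzero : ∀ α : F, (u α : A) * x = 0 := by
      intro α
      refine hτfaith _ ?_
      exact (Finset.sum_eq_zero_iff_of_nonneg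
        (fun α _ => hτpos ((u α : A) * x))).mp hsum α (Finset.mem_univ α)
    have hsxAp : star x ∈ LinearMap.range (LinearMap.mulRight ℂ p) := by
      refine ⟨p * star b, ?_⟩
      rw [LinearMap.mulRight_apply, hxeq]
      simp [star_mul, hp_star, mul_assoc]
    have hxsum : star x = ∑ α : F, (u.repr ⟨star x, hsxAp⟩ α : ℂ) • (u α : A) := by
      have h := congrArg Subtype.val (u.sum_repr ⟨star x, hsxAp⟩)
      simpa only [Submodule.coe_sum, Submodule.coe_smul] using h.symm
    have hxx : star x * x = 0 := by
      rw [hxsum, Finset.sum_mul]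
      exact Finset.sum_eq_zero fun α _ => by rw [smul_mul_assoc, hzero α, smul_zero]
    exact hτfaith x (by rw [hxx, map_zero])
  -- multiplication by z on the corner
  have hzmulS : ∀ x ∈ S, (LinearMap.mulLeft ℂ z) x ∈ S := by
    intro x hx
    simpa [LinearMap.mulLeft_apply] using hmulS z hzS x hx
  set L : S →ₗ[ℂ] S := (LinearMap.mulLeft ℂ z).restrict hzmulS with hLdef
  have hLapp : ∀ x : S, ((L x : A)) = z * (x : A) := fun x => rfl
  have hLinj : Function.Injective L := by
    rw [← LinearMap.ker_eq_bot, LinearMap.ker_eq_bot']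
    intro m hm
    have h0 : z * (m : A) = 0 := by
      have := congrArg Subtype.val hm
      simpa [hLapp] using this
    exact Subtype.ext (hinj (m : A) m.2 h0)
  have hLsurj : Function.Surjective L := LinearMap.injective_iff_surjective.mp hLinj
  obtain ⟨v, hv⟩ := hLsurj ⟨p, hpS⟩
  have hzv : z * (v : A) = p := by
    have := congrArg Subtype.val hv
    simpa [hLapp] using this
  have hvz : (v : A) * z = p := by
    have hmem : (v : A) * z - p ∈ S := S.sub_mem (hmulS _ v.2 _ hzS) hpS
    have h0 : z * ((v : A) * z - p) = 0 := by
      rw [mul_sub, ← mul_assoc, hzv, hpz, hzp, sub_self]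
    have h := hinj _ hmem h0
    exact sub_eq_zero.mp h
  -- positivity
  have hpos : ∃ y : A, z = star y * y := by
    letI : CStarAlgebra A := { }
    letI := CStarAlgebra.spectralOrder A
    haveI := CStarAlgebra.spectralOrderedRing A
    have hz0 : 0 ≤ z := by
      rw [hzdef]
      refine Finset.sum_nonneg fun α _ => ?_
      obtain ⟨y, hy⟩ := hE_pos (star (u α : A) * (u α : A)) ⟨(u α : A), rfl⟩
      rw [hy]
      exact star_mul_self_nonneg y
    refine ⟨CFC.sqrt z, ?_⟩
    rw [(IsSelfAdjoint.of_nonneg (CFC.sqrt_nonneg z)).star_eq, CFC.sqrt_mul_sqrt_self z hz0]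
  exact ⟨⟨z, hzB, hzpz.symm⟩, hpos, ⟨(v : A), (hSmem _).mp v.2, hvz, hzv⟩⟩
end

section
/- Let V be a complex inner product space and (V_m)_{m∈ℕ} an increasing sequence of finite-dimensional subspaces of V with V = ⋃_{m∈ℕ} V_m. For each m set W_m := V_m ∩ V_{m-1}^⊥ (with V_{-1} := {0}), the orthogonal complement of V_{m-1} inside V_m. Then the map K from the product ∏_{m∈ℕ} W_m to the algebraic dual of V (the space of all linear functionals V → ℂ), defined by K(s)(a) := ⟨ Σ_{n=0}^{m} s_n , a ⟩ whenever a ∈ V_m, is well defined (the value is independent of the choice of m with a ∈ V_m) and is a bijection from ∏_{m∈ℕ} W_m onto the algebraic dual of V. -/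
/-- Given an exhausting increasing sequence of finite-dimensional subspaces
`Vm` of a complex inner product space `V`, with `W 0 = Vm 0` and
`W (m+1) = Vm (m+1) ⊓ (Vm m)ᗮ`, the map `K` sending `s ∈ ∏ m, W m` to the linear
functional `a ↦ ⟨∑_{n ≤ m} s n, a⟩` (for any `m` with `a ∈ Vm m`) is well defined
and is a bijection onto the algebraic dual of `V`. -/
theorem stmt_6
    (V : Type*) [NormedAddCommGroup V] [InnerProductSpace ℂ V]
    (Vm : ℕ → Submodule ℂ V)
    (hmono : Monotone Vm)
    (hfd : ∀ m : ℕ, FiniteDimensional ℂ (Vm m))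
    (hunion : ∀ v : V, ∃ m : ℕ, v ∈ Vm m)
    (W : ℕ → Submodule ℂ V)
    (hW0 : W 0 = Vm 0)
    (hWs : ∀ m : ℕ, W (m + 1) = Vm (m + 1) ⊓ (Vm m)ᗮ) :
    ∃! K : (∀ m : ℕ, W m) → Module.Dual ℂ V,
      (∀ (s : ∀ m : ℕ, W m) (m : ℕ) (a : V), a ∈ Vm m →
        K s a = inner ℂ (∑ n ∈ Finset.range (m + 1), ((s n : V))) a) ∧
      Function.Bijective K := by
  classical
  -- W n ≤ Vm n
  have hWle : ∀ n, W n ≤ Vm n := by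
    intro n
    cases n with
    | zero => rw [hW0]
    | succ k => rw [hWs k]; exact inf_le_left
  -- orthogonality of later pieces to earlier subspaces
  have horth : ∀ (m n : ℕ) (a : V), a ∈ Vm m → m < n → ∀ x ∈ W n,
      (inner ℂ x a : ℂ) = 0 := by
    intro m n a ha hmn x hx
    obtain ⟨k, rfl⟩ : ∃ k, n = k + 1 := ⟨n - 1, (Nat.succ_pred_eq_of_pos (Nat.lt_of_le_of_lt (Nat.zero_le m) hmn)).symm⟩
    rw [hWs k] at hx
    have hx2 : x ∈ (Vm k)ᗮ := hx.2
    have hak : a ∈ Vm k := hmono (Nat.lt_succ_iff.mp hmn) ha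
    have := (Submodule.mem_orthogonal (Vm k) x).mp hx2 a hak
    rwa [← inner_eq_zero_symm] at this
  -- well-definedness: partial sums give same inner product
  have hwd : ∀ (s : ∀ m, W m) (m m' : ℕ) (a : V), a ∈ Vm m → m ≤ m' →
      (inner ℂ (∑ n ∈ Finset.range (m' + 1), ((s n : V))) a : ℂ)
        = inner ℂ (∑ n ∈ Finset.range (m + 1), ((s n : V))) a := by
    intro s m m' a ha hmm'
    have hsplit : ∑ n ∈ Finset.range (m' + 1), ((s n : V))
        = (∑ n ∈ Finset.range (m + 1), ((s n : V)))
          + ∑ n ∈ Finset.Ico (m + 1) (m' + 1), ((s n : V)) :=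
      (Finset.sum_range_add_sum_Ico _ (Nat.succ_le_succ hmm')).symm
    have hz : (inner ℂ (∑ n ∈ Finset.Ico (m + 1) (m' + 1), ((s n : V))) a : ℂ) = 0 := by
      rw [sum_inner]
      refine Finset.sum_eq_zero ?_
      intro n hn
      have := Finset.mem_Ico.mp hn
      exact horth m n a ha this.1 (s n) (s n).2
    rw [hsplit, inner_add_left, hz, add_zero]
  -- spec for the choice-based function
  set N : V → ℕ := fun a => Nat.find (hunion a) with hN
  have hNmem : ∀ a : V, a ∈ Vm (N a) := fun a => Nat.find_spec (hunion a)
  set g : (∀ m, W m) → V → ℂ :=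
    fun s a => inner ℂ (∑ n ∈ Finset.range (N a + 1), ((s n : V))) a with hg
  have hspec : ∀ (s : ∀ m, W m) (m : ℕ) (a : V), a ∈ Vm m →
      g s a = inner ℂ (∑ n ∈ Finset.range (m + 1), ((s n : V))) a := by
    intro s m a ha
    have h1 := hwd s (N a) (max (N a) m) a (hNmem a) (le_max_left _ _)
    have h2 := hwd s m (max (N a) m) a ha (le_max_right _ _)
    simp only [hg]
    rw [← h1, h2]
  -- K as linear functional
  set K : (∀ m, W m) → Module.Dual ℂ V := fun s =>
    { toFun := g s
      map_add' := by
        intro a b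
        obtain ⟨ma, hma⟩ := hunion a
        obtain ⟨mb, hmb⟩ := hunion b
        set m := max ma mb
        have ha' : a ∈ Vm m := hmono (le_max_left _ _) hma
        have hb' : b ∈ Vm m := hmono (le_max_right _ _) hmb
        have hab : a + b ∈ Vm m := (Vm m).add_mem ha' hb'
        rw [hspec s m _ hab, hspec s m _ ha', hspec s m _ hb', inner_add_right]
      map_smul' := by
        intro c a
        obtain ⟨ma, hma⟩ := hunion a
        have hca : c • a ∈ Vm ma := (Vm ma).smul_mem c hma
        show g s (c • a) = (RingHom.id ℂ) c • g s a
        rw [hspec s ma _ hca, hspec s ma _ hma, inner_smul_right]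
        rfl } with hK
  have hKapp : ∀ (s : ∀ m, W m) (m : ℕ) (a : V), a ∈ Vm m →
      K s a = inner ℂ (∑ n ∈ Finset.range (m + 1), ((s n : V))) a := by
    intro s m a ha
    exact hspec s m a ha
  refine ⟨K, ⟨hKapp, ?_, ?_⟩, ?_⟩
  · -- injective
    intro s t hst
    have hsum : ∀ m : ℕ, (∑ n ∈ Finset.range (m + 1), ((s n : V)))
        = ∑ n ∈ Finset.range (m + 1), ((t n : V)) := by
      intro m
      set d : V := (∑ n ∈ Finset.range (m + 1), ((s n : V)))
        - ∑ n ∈ Finset.range (m + 1), ((t n : V)) with hd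
      have hdmem : d ∈ Vm m := by
        apply Submodule.sub_mem
        · exact Submodule.sum_mem _ (fun n hn =>
            hmono (Nat.lt_succ_iff.mp (Finset.mem_range.mp hn)) (hWle n (s n).2))
        · exact Submodule.sum_mem _ (fun n hn =>
            hmono (Nat.lt_succ_iff.mp (Finset.mem_range.mp hn)) (hWle n (t n).2))
      have hzero : (inner ℂ d d : ℂ) = 0 := by
        have h1 := hKapp s m d hdmem
        have h2 := hKapp t m d hdmem
        rw [hst] at h1
        rw [hd, inner_sub_left, ← h1, ← h2, sub_self]
      have : d = 0 := inner_self_eq_zero.mp hzero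
      have := sub_eq_zero.mp this
      exact this
    funext m
    apply Subtype.ext
    cases m with
    | zero => simpa using hsum 0
    | succ k =>
      have h2 := hsum k
      have h1 : (∑ n ∈ Finset.range (k + 1), ((s n : V))) + (s (k+1) : V)
          = (∑ n ∈ Finset.range (k + 1), ((t n : V))) + (t (k+1) : V) := by
        rw [← Finset.sum_range_succ, ← Finset.sum_range_succ]
        exact hsum (k + 1)
      rw [h2] at h1
      exact add_left_cancel h1
  · -- surjective
    intro φ
    haveI : ∀ m, CompleteSpace (Vm m) := fun m => FiniteDimensional.complete ℂ (Vm m)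
    set v : (m : ℕ) → Vm m := fun m =>
      (InnerProductSpace.toDual ℂ (Vm m)).symm
        (LinearMap.toContinuousLinearMap (φ.comp (Vm m).subtype)) with hv
    have hvspec : ∀ (m : ℕ) (x : Vm m), (inner ℂ ((v m : V)) (x : V) : ℂ) = φ x := by
      intro m x
      have := InnerProductSpace.toDual_symm_apply (𝕜 := ℂ) (E := Vm m)
        (x := x) (y := LinearMap.toContinuousLinearMap (φ.comp (Vm m).subtype))
      rw [← Submodule.coe_inner]
      exact this
    have hvsub : ∀ m : ℕ, ((v (m+1) : V)) - (v m : V) ∈ W (m + 1) := by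
      intro m
      rw [hWs m, Submodule.mem_inf]
      constructor
      · exact Submodule.sub_mem _ (v (m+1)).2 (hmono (Nat.le_succ m) (v m).2)
      · rw [Submodule.mem_orthogonal]
        intro u hu
        have h1 : (inner ℂ ((v (m+1) : V)) u : ℂ) = φ u := hvspec (m+1) ⟨u, hmono (Nat.le_succ m) hu⟩
        have h2 : (inner ℂ ((v m : V)) u : ℂ) = φ u := hvspec m ⟨u, hu⟩
        rw [inner_sub_right, ← inner_conj_symm u ((v (m+1) : V)),
          ← inner_conj_symm u ((v m : V)), h1, h2, sub_self]
    set s : ∀ m, W m := fun m =>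
      Nat.casesOn m ⟨(v 0 : V), by rw [hW0]; exact (v 0).2⟩ (fun k => ⟨(v (k+1) : V) - (v k : V), hvsub k⟩)
      with hs
    have htel : ∀ m : ℕ, (∑ n ∈ Finset.range (m + 1), ((s n : V))) = (v m : V) := by
      intro m
      induction m with
      | zero => simp [hs]
      | succ k ih => rw [Finset.sum_range_succ, ih]; simp [hs]
    refine ⟨s, ?_⟩
    apply LinearMap.ext
    intro a
    obtain ⟨m, hm⟩ := hunion a
    rw [hKapp s m a hm, htel m]
    exact hvspec m ⟨a, hm⟩
  · -- uniqueness
    intro K' ⟨hK'spec, _⟩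
    funext s
    apply LinearMap.ext
    intro a
    obtain ⟨m, hm⟩ := hunion a
    rw [hK'spec s m a hm, hKapp s m a hm]
end
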